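/- Let $\gamma_k = \gamma_1 k^{-a}$ with $a \in (0,1]$. For any integers $1 \le k_m < k_{m+1}$ with $I_m = k_{m+1} - k_m \le k_m$ and $\bar{\gamma}_m = \frac{1}{I_m}\sum_{k=k_m}^{k_{m+1}-1}\gamma_k$, the weights $\alpha_k = \sqrt{\gamma_k / (I_m \bar{\gamma}_m)} - I_m^{-1/2}$ satisfy $\sqrt{\sum_{k=k_m}^{k_{m+1}-1} \alpha_k^2} \le a I_m / k_m$. -/

import Mathlib

open Finset

/-- ℓ₂-discrepancy between normalized weighted and unweighted averaging weights over
a block `[k_m, k_{m+1})` of length `I_m ≤ k_m`, for step sizes `γ_k = γ₁ k^{-a}`: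
with `γ̄_m` the block-average step size and
`α_k = √(γ_k / (I_m γ̄_m)) - I_m^{-1/2}`, one has `√(∑ α_k²) ≤ a I_m / k_m`. -/
theorem stmt3 (γ : ℕ → ℝ) (γ1 a : ℝ)
    (hγ : ∀ k, γ k = γ1 * (k : ℝ) ^ (-a))
    (ha0 : 0 < a) (ha1 : a ≤ 1) (hγ1 : 0 < γ1)
    (km kmp1 : ℕ) (hkm : 1 ≤ km) (hlt : km < kmp1)
    (I : ℕ) (hI : I = kmp1 - km) (hIle : I ≤ km)
    (γbar : ℝ) (hγbar : γbar = (∑ k ∈ Finset.Ico km kmp1, γ k) / (I : ℝ))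
    (α : ℕ → ℝ)
    (hα : ∀ k, α k = Real.sqrt (γ k / ((I : ℝ) * γbar)) - 1 / Real.sqrt (I : ℝ)) :
    Real.sqrt (∑ k ∈ Finset.Ico km kmp1, (α k) ^ 2) ≤ a * (I : ℝ) / (km : ℝ) := by
  have hI1 : 1 ≤ I := by omega
  have hIpos : (0:ℝ) < (I:ℝ) := by exact_mod_cast hI1
  have hkmpos : (0:ℝ) < (km:ℝ) := by exact_mod_cast hkm
  set S := Finset.Ico km kmp1 with hS
  set K := kmp1 - 1 with hKdef
  have hKkm : km ≤ K := by omega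
  have hK1 : 1 ≤ K := by omega
  have hKpos : (0:ℝ) < (K:ℝ) := by exact_mod_cast hK1
  have hKr : (K:ℝ) = (km:ℝ) + (I:ℝ) - 1 := by
    have h2 : K + 1 = km + I := by omega
    have : (K:ℝ) + 1 = (km:ℝ) + (I:ℝ) := by exact_mod_cast h2
    linarith
  have hγpos : ∀ k : ℕ, 1 ≤ k → 0 < γ k := by
    intro k hk
    rw [hγ]
    have hk' : (0:ℝ) < (k:ℝ) := by exact_mod_cast hk
    positivity
  have hmono : ∀ j k : ℕ, 1 ≤ j → j ≤ k → γ k ≤ γ j := by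
    intro j k hj hjk
    rw [hγ, hγ]
    refine mul_le_mul_of_nonneg_left ?_ hγ1.le
    exact Real.rpow_le_rpow_of_nonpos (by exact_mod_cast hj) (by exact_mod_cast hjk)
      (by linarith)
  have hcard : S.card = I := by rw [hS, Nat.card_Ico]; omega
  have hlbk : ∀ k ∈ S, γ K ≤ γ k := by
    intro k hk
    rw [hS, Finset.mem_Ico] at hk
    exact hmono k K (by omega) (by omega)
  have hubk : ∀ k ∈ S, γ k ≤ γ km := by
    intro k hk
    rw [hS, Finset.mem_Ico] at hk
    exact hmono km k hkm (by omega)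
  have hγK := hγpos K hK1
  have hγkm := hγpos km hkm
  have hγbar_lb : γ K ≤ γbar := by
    rw [hγbar, le_div_iff₀ hIpos]
    calc γ K * I = ∑ _k ∈ S, γ K := by rw [Finset.sum_const, hcard, nsmul_eq_mul]; ring
      _ ≤ ∑ k ∈ S, γ k := Finset.sum_le_sum hlbk
  have hγbar_ub : γbar ≤ γ km := by
    rw [hγbar, div_le_iff₀ hIpos]
    calc (∑ k ∈ S, γ k) ≤ ∑ _k ∈ S, γ km := Finset.sum_le_sum hubk
      _ = γ km * I := by rw [Finset.sum_const, hcard, nsmul_eq_mul]; ring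
  have hγbarpos : 0 < γbar := lt_of_lt_of_le hγK hγbar_lb
  have hsqKbar : Real.sqrt (γ K) ≤ Real.sqrt γbar := Real.sqrt_le_sqrt hγbar_lb
  have hsqbarkm : Real.sqrt γbar ≤ Real.sqrt (γ km) := Real.sqrt_le_sqrt hγbar_ub
  set D := Real.sqrt (γ km) - Real.sqrt (γ K) with hD
  have hDnn : 0 ≤ D := sub_nonneg.mpr (Real.sqrt_le_sqrt (hmono km K hkm hKkm))
  have hIγbar : (0:ℝ) < (I:ℝ) * γbar := mul_pos hIpos hγbarpos
  have hαsq : ∀ k ∈ S, (α k)^2 = (Real.sqrt (γ k) - Real.sqrt γbar)^2 / ((I:ℝ) * γbar) := by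
    intro k hk
    rw [hS, Finset.mem_Ico] at hk
    have hγk := (hγpos k (by omega)).le
    have h1 : Real.sqrt (γ k / ((I:ℝ) * γbar))
        = Real.sqrt (γ k) / Real.sqrt ((I:ℝ)*γbar) := Real.sqrt_div hγk _
    have h2 : (1:ℝ) / Real.sqrt (I:ℝ) = Real.sqrt γbar / Real.sqrt ((I:ℝ)*γbar) := by
      rw [Real.sqrt_mul (Nat.cast_nonneg I)]
      rw [eq_div_iff (by positivity)]
      field_simp
    rw [hα, h1, h2, div_sub_div_same, div_pow, Real.sq_sqrt hIγbar.le]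
  have hbound : ∀ k ∈ S, (α k)^2 ≤ D^2 / ((I:ℝ)*γbar) := by
    intro k hk
    rw [hαsq k hk]
    have hlo : Real.sqrt (γ K) ≤ Real.sqrt (γ k) := Real.sqrt_le_sqrt (hlbk k hk)
    have hhi : Real.sqrt (γ k) ≤ Real.sqrt (γ km) := Real.sqrt_le_sqrt (hubk k hk)
    have hsq : (Real.sqrt (γ k) - Real.sqrt γbar)^2 ≤ D^2 :=
      sq_le_sq' (by rw [hD]; linarith) (by rw [hD]; linarith)
    gcongr
  have hsum : ∑ k ∈ S, (α k)^2 ≤ D^2/γbar := by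
    calc ∑ k ∈ S, (α k)^2 ≤ ∑ _k ∈ S, D^2/((I:ℝ)*γbar) := Finset.sum_le_sum hbound
      _ = (I:ℝ) * (D^2/((I:ℝ)*γbar)) := by rw [Finset.sum_const, hcard, nsmul_eq_mul]
      _ = D^2/γbar := by
          field_simp
  have hsum2 : ∑ k ∈ S, (α k)^2 ≤ D^2/(γ K) := by
    refine hsum.trans ?_
    gcongr
  have hstep1 : Real.sqrt (∑ k ∈ S, (α k)^2) ≤ D / Real.sqrt (γ K) := by
    refine (Real.sqrt_le_sqrt hsum2).trans_eq ?_
    rw [Real.sqrt_div (sq_nonneg D), Real.sqrt_sq hDnn]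
  have hsqKpos : 0 < Real.sqrt (γ K) := Real.sqrt_pos.mpr hγK
  have hratio : D / Real.sqrt (γ K) = ((K:ℝ)/(km:ℝ))^(a/2) - 1 := by
    rw [hD, sub_div, div_self hsqKpos.ne', ← Real.sqrt_div hγkm.le]
    congr 1
    have hq : γ km / γ K = ((K:ℝ)/(km:ℝ))^a := by
      rw [hγ, hγ, Real.div_rpow hKpos.le hkmpos.le,
        Real.rpow_neg hkmpos.le, Real.rpow_neg hKpos.le]
      have h1 : ((km:ℝ))^a ≠ 0 := (Real.rpow_pos_of_pos hkmpos a).ne'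
      have h2 : ((K:ℝ))^a ≠ 0 := (Real.rpow_pos_of_pos hKpos a).ne'
      field_simp
    rw [hq, Real.sqrt_eq_rpow, ← Real.rpow_mul (by positivity)]
    congr 1
    ring
  have hbern : ((K:ℝ)/(km:ℝ))^(a/2) - 1 ≤ (a/2) * (((I:ℝ)-1)/(km:ℝ)) := by
    set s : ℝ := (K:ℝ)/(km:ℝ) - 1 with hs
    have hs0 : 0 ≤ s := by
      rw [hs]
      have : (1:ℝ) ≤ (K:ℝ)/(km:ℝ) := (one_le_div hkmpos).mpr (by exact_mod_cast hKkm)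
      linarith
    have hb := rpow_one_add_le_one_add_mul_self (s := s) (by linarith) (p := a/2)
      (by linarith) (by linarith)
    have hseq : s = ((I:ℝ)-1)/(km:ℝ) := by
      rw [hs, hKr]
      field_simp
      ring
    have h1s : 1 + s = (K:ℝ)/(km:ℝ) := by rw [hs]; ring
    rw [h1s] at hb
    rw [hseq] at hb
    linarith
  have hfinal : (a/2) * (((I:ℝ)-1)/(km:ℝ)) ≤ a * (I:ℝ) / (km:ℝ) := by
    have h1 : a/2*((I:ℝ)-1) ≤ a*(I:ℝ) := by nlinarith
    calc a/2 * (((I:ℝ)-1)/(km:ℝ)) = (a/2*((I:ℝ)-1))/(km:ℝ) := by ring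
      _ ≤ a*(I:ℝ)/(km:ℝ) := by gcongr
  calc Real.sqrt (∑ k ∈ S, (α k)^2) ≤ D / Real.sqrt (γ K) := hstep1
    _ = ((K:ℝ)/(km:ℝ))^(a/2) - 1 := hratio
    _ ≤ (a/2) * (((I:ℝ)-1)/(km:ℝ)) := hbern
    _ ≤ a * (I:ℝ) / (km:ℝ) := hfinal
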